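/- If x is a finite poset with exactly one minimal vertex and |x| ≥ 2 (a pure antimatter causet), then among all posets y with x → y, exactly one is mixed (has at least two minimal vertices with at least one having a single-parent child), namely the one obtained by adjoining an isolated vertex to x. -/

import Mathlib

/-- A causet: a finite partial order on a finite set of labels. -/
structure Causet where
  carrier : Finset ℕ
  rel : ℕ → ℕ → Prop
  rel_mem : ∀ a b, rel a b → a ∈ carrier ∧ b ∈ carrier
  irrefl : ∀ a, ¬ rel a a
  trans : ∀ a b c, rel a b → rel b c → rel a c

namespace Causet

/-- A minimal vertex. -/
def Minimal (x : Causet) (a : ℕ) : Prop :=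
  a ∈ x.carrier ∧ ∀ b, ¬ x.rel b a

/-- A maximal vertex. -/
def Maximal (x : Causet) (a : ℕ) : Prop :=
  a ∈ x.carrier ∧ ∀ b, ¬ x.rel a b

/-- `a` is a parent of `b` (a lower cover). -/
def Parent (x : Causet) (a b : ℕ) : Prop :=
  x.rel a b ∧ ∀ c, ¬ (x.rel a c ∧ x.rel c b)

/-- `y` is obtained from `x` by adjoining the single new element `a`, maximal in `y`. -/
def ProducesWith (x y : Causet) (a : ℕ) : Prop :=
  a ∉ x.carrier ∧ y.carrier = insert a x.carrier ∧ y.Maximal a ∧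
    ∀ u v, u ∈ x.carrier → v ∈ x.carrier → (y.rel u v ↔ x.rel u v)

/-- `x → y`: `y` is obtained from `x` by adjoining a single maximal element. -/
def Produces (x y : Causet) : Prop := ∃ a, ProducesWith x y a

/-- `y` is a product of `x`: `y = x` or there is a chain of productions from `x` to `y`. -/
def ProductOf (x y : Causet) : Prop := Relation.ReflTransGen Produces x y

/-- `x` is (a copy of) the 2-element chain. -/
def IsTwoChain (x : Causet) : Prop :=
  ∃ a b, a ≠ b ∧ x.carrier = {a, b} ∧ x.rel a b ∧ ∀ u v, x.rel u v → u = a ∧ v = b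

/-- `x` is (a copy of) the 2-element antichain. -/
def IsTwoAntichain (x : Causet) : Prop :=
  ∃ a b, a ≠ b ∧ x.carrier = {a, b} ∧ ∀ u v, ¬ x.rel u v

/-- `x` has at least two minimal vertices. -/
def TwoMinimal (x : Causet) : Prop :=
  ∃ a b, a ≠ b ∧ x.Minimal a ∧ x.Minimal b

/-- The minimal vertex `a` has a single-parent child (a child whose unique parent is `a`). -/
def MinWithSPC (x : Causet) (a : ℕ) : Prop :=
  x.Minimal a ∧ ∃ c, x.Parent a c ∧ ∀ d, x.Parent d c → d = a

/-- `x` is mixed: at least two minimal vertices, at least one of which has a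
single-parent child. -/
def Mixed (x : Causet) : Prop :=
  TwoMinimal x ∧ ∃ a, MinWithSPC x a

end Causet

/-- If `x` has exactly one minimal vertex and `|x| ≥ 2` (pure antimatter),
then among the offspring of `x`, exactly one is mixed, namely the one obtained by
adjoining an isolated vertex: an offspring is mixed iff its adjoined vertex is isolated,
and a mixed offspring exists. -/
theorem stmt5 (x : Causet) (hx : 2 ≤ x.carrier.card) (hone : ∃! a, x.Minimal a) :
    (∀ y a, x.ProducesWith y a →
        (y.Mixed ↔ (∀ b, ¬ y.rel b a) ∧ (∀ b, ¬ y.rel a b))) ∧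
    ∃ y a, x.ProducesWith y a ∧ y.Mixed ∧ (∀ b, ¬ y.rel b a) ∧ (∀ b, ¬ y.rel a b) := by
  classical
  obtain ⟨m, hm, hmu⟩ := hone
  -- existence of a single-parent child of m in x
  obtain ⟨c, hmc, pred_eq⟩ : ∃ c, x.rel m c ∧ ∀ d, x.rel d c → d = m := by
    have hS : (x.carrier.erase m).Nonempty := by
      rw [← Finset.card_pos, Finset.card_erase_of_mem hm.1]; omega
    obtain ⟨c, hcS, hcmin⟩ := Finset.exists_min_image (x.carrier.erase m)
      (fun v => (x.carrier.filter (fun d => x.rel d v)).card) hS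
    have hc : c ∈ x.carrier := (Finset.mem_erase.mp hcS).2
    have hcm : c ≠ m := (Finset.mem_erase.mp hcS).1
    have pred_eq : ∀ d, x.rel d c → d = m := by
      intro d hd
      by_contra hdm
      have hdmem : d ∈ x.carrier := (x.rel_mem d c hd).1
      have hdS : d ∈ x.carrier.erase m := Finset.mem_erase.mpr ⟨hdm, hdmem⟩
      have hle := hcmin d hdS
      have hss : (x.carrier.filter (fun e => x.rel e d)) ⊂
          x.carrier.filter (fun e => x.rel e c) := by
        constructor
        · intro e he
          simp only [Finset.mem_filter] at he ⊢
          exact ⟨he.1, x.trans _ _ _ he.2 hd⟩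
        · intro hsub
          have hd' : d ∈ x.carrier.filter (fun e => x.rel e c) := by
            simp [hdmem, hd]
          have := Finset.mem_filter.mp (hsub hd')
          exact x.irrefl d this.2
      have := Finset.card_lt_card hss
      try simp only at hle
      omega
    refine ⟨c, ?_, pred_eq⟩
    have : ¬ x.Minimal c := fun h => hcm (hmu c h)
    unfold Causet.Minimal at this
    push_neg at this
    obtain ⟨b, hb⟩ := this hc
    rwa [pred_eq b hb] at hb
  have hxparent : x.Parent m c ∧ ∀ d, x.Parent d c → d = m := by
    refine ⟨⟨hmc, ?_⟩, fun d hd => pred_eq d hd.1⟩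
    rintro e ⟨h1, h2⟩
    exact x.irrefl m (pred_eq e h2 ▸ h1)
  have main : ∀ y a, x.ProducesWith y a →
      (y.Mixed ↔ (∀ b, ¬ y.rel b a) ∧ (∀ b, ¬ y.rel a b)) := by
    rintro y a ⟨ha, hcar, ⟨hamem, hamax⟩, hrest⟩
    have ymem : ∀ u, u ∈ y.carrier → u = a ∨ u ∈ x.carrier := by
      intro u hu; rw [hcar] at hu; exact Finset.mem_insert.mp hu
    have key : ∀ u, y.Minimal u → u ∈ x.carrier → u = m := by
      rintro u ⟨humem, humin⟩ hux
      refine hmu u ⟨hux, fun b hb => ?_⟩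
      have hbmem : b ∈ x.carrier := (x.rel_mem b u hb).1
      exact humin b ((hrest b u hbmem hux).mpr hb)
    constructor
    · rintro ⟨⟨p, q, hpq, hp, hq⟩, -⟩
      have hiso : ∀ b, ¬ y.rel b a := by
        rcases ymem p hp.1 with rfl | hpx
        · exact hp.2
        · rcases ymem q hq.1 with rfl | hqx
          · exact hq.2
          · exact absurd ((key p hp hpx).trans (key q hq hqx).symm) hpq
      exact ⟨hiso, hamax⟩
    · rintro ⟨hiso, -⟩
      have hmmem : m ∈ y.carrier := by rw [hcar]; exact Finset.mem_insert_of_mem hm.1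
      have hmmin : y.Minimal m := by
        refine ⟨hmmem, fun b hb => ?_⟩
        rcases ymem b (y.rel_mem b m hb).1 with rfl | hbx
        · exact hamax m hb
        · exact hm.2 b ((hrest b m hbx hm.1).mp hb)
      have hcx : c ∈ x.carrier := (x.rel_mem m c hmc).2
      refine ⟨⟨a, m, fun h => ha (h ▸ hm.1), ⟨hamem, hiso⟩, hmmin⟩,
        m, hmmin, c, ⟨(hrest m c hm.1 hcx).mpr hmc, ?_⟩, ?_⟩
      · rintro e ⟨h1, h2⟩
        rcases ymem e (y.rel_mem m e h1).2 with rfl | hex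
        · exact hiso m h1
        · exact hxparent.1.2 e ⟨(hrest m e hm.1 hex).mp h1, (hrest e c hex hcx).mp h2⟩
      · rintro d ⟨hd1, hd2⟩
        rcases ymem d (y.rel_mem d c hd1).1 with rfl | hdx
        · exact absurd hd1 (hamax c)
        · refine hxparent.2 d ⟨(hrest d c hdx hcx).mp hd1, ?_⟩
          rintro e ⟨h1, h2⟩
          have hex : e ∈ x.carrier := (x.rel_mem d e h1).2
          exact hd2 e ⟨(hrest d e hdx hex).mpr h1, (hrest e c hex hcx).mpr h2⟩
  refine ⟨main, ?_⟩
  set a : ℕ := x.carrier.sup id + 1 with ha_def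
  have ha : a ∉ x.carrier := by
    intro h
    have := Finset.le_sup (f := id) h
    simp only [id] at this
    omega
  set y : Causet := ⟨insert a x.carrier, x.rel,
    fun p q h => ⟨Finset.mem_insert_of_mem (x.rel_mem p q h).1,
      Finset.mem_insert_of_mem (x.rel_mem p q h).2⟩,
    x.irrefl, x.trans⟩ with hy_def
  have hrel : ∀ p q, y.rel p q ↔ x.rel p q := fun _ _ => Iff.rfl
  have hiso1 : ∀ b, ¬ y.rel b a := fun b h => ha (x.rel_mem b a h).2
  have hiso2 : ∀ b, ¬ y.rel a b := fun b h => ha (x.rel_mem a b h).1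
  have hprod : x.ProducesWith y a :=
    ⟨ha, rfl, ⟨Finset.mem_insert_self a _, hiso2⟩, fun u v _ _ => Iff.rfl⟩
  exact ⟨y, a, hprod, (main y a hprod).mpr ⟨hiso1, hiso2⟩, hiso1, hiso2⟩
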